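/- Let n ≥ 1, let Ω ⊂ ℝⁿ be a non-empty bounded open set with diameter d_Ω, and set K = ℝⁿ \ Ω. Let f : ℝⁿ → ℝ be bounded and uniformly continuous with |f(x)| ≤ A₀ for some A₀ > 0 and all x ∈ ℝⁿ, and suppose ω : [0, ∞) → [0, ∞) is concave and nondecreasing with |f(x) − f(y)| ≤ ω(|x − y|) for all x, y ∈ ℝⁿ and ω(t) ≤ a·t + b for all t ≥ 0, for some constants a ≥ 0, b ≥ 0. Then for every λ > 0, every M > A₀ + λ·d_Ω², and every x ∈ ℝⁿ, |A^M_λ(f_K)(x) − f(x)| ≤ ω( r_c(x) + a/λ + √(2b/λ) ), where r_c(x) is the convex density radius of x with respect to K. -/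
import Mathlib


/-- Convex envelope: pointwise sup of affine minorants. -/
noncomputable def convEnv {n : ℕ} (g : EuclideanSpace ℝ (Fin n) → ℝ)
    (x : EuclideanSpace ℝ (Fin n)) : ℝ :=
  sSup {a : ℝ | ∃ ℓ : EuclideanSpace ℝ (Fin n) →ᵃ[ℝ] ℝ, (∀ y, ℓ y ≤ g y) ∧ a = ℓ x}

/-- Lower compensated convex transform. -/
noncomputable def lowerT {n : ℕ} (lam : ℝ) (f : EuclideanSpace ℝ (Fin n) → ℝ)
    (x : EuclideanSpace ℝ (Fin n)) : ℝ :=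
  convEnv (fun y => f y + lam * ‖y‖ ^ 2) x - lam * ‖x‖ ^ 2

/-- Upper compensated convex transform. -/
noncomputable def upperT {n : ℕ} (lam : ℝ) (f : EuclideanSpace ℝ (Fin n) → ℝ)
    (x : EuclideanSpace ℝ (Fin n)) : ℝ :=
  lam * ‖x‖ ^ 2 - convEnv (fun y => lam * ‖y‖ ^ 2 - f y) x

/-- Extension of `f|_K` by the constant `M` outside of `K`. -/
noncomputable def extWith {n : ℕ} (K : Set (EuclideanSpace ℝ (Fin n)))
    (f : EuclideanSpace ℝ (Fin n) → ℝ) (M : ℝ) (x : EuclideanSpace ℝ (Fin n)) : ℝ :=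
  open Classical in if x ∈ K then f x else M

/-- Average compensated convex approximation of `f|_K`, of scale `λ` and level `M`:
`A^M_λ(f_K) = ½ (C^l_λ(f_K^M) + C^u_λ(f_K^{−M}))`. -/
noncomputable def avgApprox {n : ℕ} (lam M : ℝ) (K : Set (EuclideanSpace ℝ (Fin n)))
    (f : EuclideanSpace ℝ (Fin n) → ℝ) (x : EuclideanSpace ℝ (Fin n)) : ℝ :=
  (lowerT lam (extWith K f M) x + upperT lam (extWith K f (-M)) x) / 2

/-- Convex density radius: smallest `r ≥ 0` such that `x` lies in the convex hull
of `K ∩ B̄(x; r)`. -/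
noncomputable def convDensRad {n : ℕ} (K : Set (EuclideanSpace ℝ (Fin n)))
    (x : EuclideanSpace ℝ (Fin n)) : ℝ :=
  sInf {r : ℝ | 0 ≤ r ∧ x ∈ convexHull ℝ (K ∩ Metric.closedBall x r)}

open scoped RealInnerProductSpace
open Metric Set

section Helpers

variable {n : ℕ}

local notation "E" => EuclideanSpace ℝ (Fin n)

lemma aff_decomp (ℓ : E →ᵃ[ℝ] ℝ) (y : E) : ℓ y = ℓ.linear y + ℓ 0 := by
  have h := ℓ.map_vadd (0 : E) y
  simpa using h

lemma aff_sum (ℓ : E →ᵃ[ℝ] ℝ) {ι : Type*} (t : Finset ι) (w : ι → ℝ) (z : ι → E)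
    (hw1 : ∑ i ∈ t, w i = 1) :
    ℓ (∑ i ∈ t, w i • z i) = ∑ i ∈ t, w i * ℓ (z i) := by
  rw [aff_decomp ℓ, map_sum]
  have h1 : ∀ i ∈ t, ℓ.linear (w i • z i) = w i * ℓ.linear (z i) := by
    intro i _; rw [map_smul]; rfl
  have h2 : ∀ i ∈ t, w i * ℓ (z i) = w i * ℓ.linear (z i) + w i * ℓ 0 := by
    intro i _; rw [aff_decomp ℓ (z i)]; ring
  rw [Finset.sum_congr rfl h1, Finset.sum_congr rfl h2, Finset.sum_add_distrib,
    ← Finset.sum_mul, hw1]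
  ring

lemma sum_norm_sq {ι : Type*} (t : Finset ι) (w : ι → ℝ) (z : ι → E) (x : E)
    (hw1 : ∑ i ∈ t, w i = 1) (hbar : ∑ i ∈ t, w i • z i = x) :
    ∑ i ∈ t, w i * ‖z i‖ ^ 2 = ‖x‖ ^ 2 + ∑ i ∈ t, w i * ‖z i - x‖ ^ 2 := by
  have hz : ∀ i ∈ t, w i * ‖z i‖ ^ 2
      = w i * ‖z i - x‖ ^ 2 + 2 * (w i * ⟪z i - x, x⟫) + w i * ‖x‖ ^ 2 := by
    intro i _
    have h := norm_add_sq_real (z i - x) x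
    rw [sub_add_cancel] at h
    rw [h]; ring
  rw [Finset.sum_congr rfl hz, Finset.sum_add_distrib, Finset.sum_add_distrib]
  have hzero : ∑ i ∈ t, w i • (z i - x) = (0 : E) := by
    have hs : ∀ i ∈ t, w i • (z i - x) = w i • z i - w i • x := fun i _ => smul_sub _ _ _
    rw [Finset.sum_congr rfl hs, Finset.sum_sub_distrib, hbar, ← Finset.sum_smul, hw1, one_smul,
      sub_self]
  have hi : ∑ i ∈ t, 2 * (w i * ⟪z i - x, x⟫) = 0 := by
    have h1 : ∑ i ∈ t, w i * ⟪z i - x, x⟫ = ⟪∑ i ∈ t, w i • (z i - x), x⟫ := by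
      rw [sum_inner]
      exact Finset.sum_congr rfl fun i _ => (real_inner_smul_left _ _ _).symm
    rw [← Finset.mul_sum, h1, hzero, inner_zero_left, mul_zero]
  rw [hi, ← Finset.sum_mul, hw1]
  ring

end Helpers


section Helpers2

variable {n : ℕ}

local notation "E" => EuclideanSpace ℝ (Fin n)

lemma omega_quad {ω : ℝ → ℝ} {a b lam : ℝ} (hωm : MonotoneOn ω (Set.Ici 0))
    (hω0 : ∀ t, 0 ≤ t → 0 ≤ ω t) (hab : ∀ t, 0 ≤ t → ω t ≤ a * t + b)
    (ha : 0 ≤ a) (hb : 0 ≤ b) (hlam : 0 < lam) (t : ℝ) (ht : 0 ≤ t) :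
    ω t ≤ ω (a / lam + Real.sqrt (2 * b / lam)) + lam * t ^ 2 := by
  set s := Real.sqrt (2 * b / lam) with hs
  have hs0 : 0 ≤ s := Real.sqrt_nonneg _
  have hs2 : lam * s ^ 2 = 2 * b := by
    rw [hs, Real.sq_sqrt (by positivity)]
    field_simp
  have hc : lam * (a / lam) = a := by field_simp
  have hτ0 : 0 ≤ a / lam + s := by positivity
  rcases le_or_gt t (a / lam + s) with h | h
  · have h2 := hωm (Set.mem_Ici.mpr ht) (Set.mem_Ici.mpr hτ0) h
    nlinarith [sq_nonneg t]
  · have h1 := hab t ht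
    have h2 := hω0 (a / lam + s) hτ0
    nlinarith [mul_nonneg (mul_nonneg hlam.le ht) (sub_pos.mpr h).le,
      mul_nonneg (mul_nonneg hlam.le hs0) (sub_pos.mpr h).le,
      mul_nonneg ha hs0, mul_nonneg (mul_nonneg hlam.le hs0) ht]

lemma m_bound {lam a b ε m r' : ℝ} (hlam : 0 < lam) (ha : 0 ≤ a) (hb : 0 ≤ b)
    (hε : 0 ≤ ε) (hm : 0 ≤ m) (hr' : 0 ≤ r')
    (H : lam * m ^ 2 ≤ lam * r' ^ 2 + a * m + a * r' + 2 * b + ε) :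
    m ≤ r' + (a / lam + Real.sqrt (2 * b / lam)) + Real.sqrt (ε / lam) := by
  have key : ∀ c s δ : ℝ, 0 ≤ c → 0 ≤ s → 0 ≤ δ → lam * c = a → lam * s ^ 2 = 2 * b →
      lam * δ ^ 2 = ε → m ≤ r' + (c + s) + δ := by
    intro c s δ hc0 hs0 hδ0 hc hs2 hδ2
    have hq1 : lam * c * c = a * c := by rw [hc]
    have hq2 : lam * c * s = a * s := by rw [hc]
    have hq3 : lam * c * δ = a * δ := by rw [hc]
    have hq4 : lam * c * r' = a * r' := by rw [hc]
    by_contra hcon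
    push_neg at hcon
    have hρ0 : 0 ≤ r' + (c + s) + δ := by positivity
    have h1 : lam * (r' + (c + s) + δ) ^ 2 - a * (r' + (c + s) + δ)
        ≥ lam * r' ^ 2 + a * r' + 2 * b + ε := by
      nlinarith [hq1, hq2, hq3, hq4, hs2, hδ2,
        mul_nonneg (mul_nonneg hlam.le hr') hs0,
        mul_nonneg (mul_nonneg hlam.le hr') hδ0,
        mul_nonneg (mul_nonneg hlam.le hs0) hδ0,
        mul_nonneg ha hs0, mul_nonneg ha hδ0, mul_nonneg ha hr']
    have hmρ : 0 < m - (r' + (c + s) + δ) := sub_pos.mpr hcon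
    have hm0' : 0 < lam * m := mul_pos hlam (lt_of_le_of_lt hρ0 hcon)
    have hρa : a ≤ lam * (r' + (c + s) + δ) := by
      nlinarith [hc, mul_nonneg hlam.le hr', mul_nonneg hlam.le hs0, mul_nonneg hlam.le hδ0]
    have h2 : 0 < lam * (m + (r' + (c + s) + δ)) - a := by nlinarith [hm0', hρa]
    nlinarith [mul_pos hmρ h2, h1, H]
  refine key (a / lam) (Real.sqrt (2 * b / lam)) (Real.sqrt (ε / lam)) (by positivity)
    (Real.sqrt_nonneg _) (Real.sqrt_nonneg _) (by field_simp) ?_ ?_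
  · rw [Real.sq_sqrt (by positivity)]; field_simp
  · rw [Real.sq_sqrt (by positivity)]; field_simp

end Helpers2

section Helpers3

variable {n : ℕ}

local notation "E" => EuclideanSpace ℝ (Fin n)

/-- The affine map `y ↦ ⟪v, y⟫ + c`. -/
noncomputable def affIn (v : E) (c : ℝ) : E →ᵃ[ℝ] ℝ :=
  AffineMap.mk' (fun y => ⟪v, y⟫ + c) ((innerSL ℝ v).toLinearMap) 0 (by
    intro p
    simp [vsub_eq_sub, vadd_eq_add, inner_zero_right])

lemma affIn_apply (v : E) (c : ℝ) (y : E) : affIn v c y = ⟪v, y⟫ + c := by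
  simp [affIn]

lemma ray_exit {Ω : Set E} (hΩo : IsOpen Ω) (hΩb : Bornology.IsBounded Ω)
    {y : E} (hy : y ∈ Ω) (e : E) (he : ‖e‖ = 1) :
    ∃ s : ℝ, 0 < s ∧ y + s • e ∈ Ωᶜ ∧ y + s • e ∈ closure Ω := by
  obtain ⟨ρ, hρpos, hρ⟩ := hΩb.subset_ball_lt 0 0
  set T := {s : ℝ | 0 ≤ s ∧ y + s • e ∈ Ωᶜ} with hT
  have hTne : T.Nonempty := by
    refine ⟨ρ + ‖y‖, by positivity, ?_⟩
    intro hmem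
    have h1 := hρ hmem
    rw [Metric.mem_ball, dist_zero_right] at h1
    have h2 : ‖(ρ + ‖y‖) • e‖ ≤ ‖y + (ρ + ‖y‖) • e‖ + ‖y‖ := by
      have := norm_sub_le (y + (ρ + ‖y‖) • e) y
      simpa using this
    rw [norm_smul, he, Real.norm_eq_abs, abs_of_pos (by positivity)] at h2
    simp only [mul_one] at h2
    linarith
  have hTcl : IsClosed T := by
    have : T = Set.Ici 0 ∩ ((fun s : ℝ => y + s • e) ⁻¹' Ωᶜ) := by
      ext s; simp [hT, Set.mem_Ici, and_comm]
    rw [this]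
    exact isClosed_Ici.inter (hΩo.isClosed_compl.preimage (by continuity))
  have hTbdd : BddBelow T := ⟨0, fun s hs => hs.1⟩
  set tp := sInf T with htpdef
  have htp : tp ∈ T := hTcl.csInf_mem hTne hTbdd
  have htp0 : 0 < tp := by
    rcases lt_or_eq_of_le htp.1 with h | h
    · exact h
    · exfalso
      have : y + tp • e ∈ Ωᶜ := htp.2
      rw [← h] at this
      simp at this
      exact this hy
  refine ⟨tp, htp0, htp.2, ?_⟩
  have hbelow : ∀ s : ℝ, 0 ≤ s → s < tp → y + s • e ∈ Ω := by
    intro s hs0 hst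
    by_contra hnot
    have : s ∈ T := ⟨hs0, hnot⟩
    exact absurd (csInf_le hTbdd this) (not_le.mpr hst)
  have htend : Filter.Tendsto (fun s : ℝ => y + s • e) (nhdsWithin tp (Set.Iio tp))
      (nhds (y + tp • e)) :=
    ((continuous_const.add (continuous_id.smul continuous_const)).tendsto tp).mono_left
      nhdsWithin_le_nhds
  refine mem_closure_of_tendsto htend ?_
  filter_upwards [Ioo_mem_nhdsLT_of_mem (Set.mem_Ioc.mpr ⟨htp0, le_refl tp⟩)] with s hs
  exact hbelow s hs.1.le hs.2

end Helpers3

section Helpers4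

variable {n : ℕ}

local notation "E" => EuclideanSpace ℝ (Fin n)

lemma mem_hull_compl (hn : 1 ≤ n) {Ω : Set E} (hΩo : IsOpen Ω)
    (hΩb : Bornology.IsBounded Ω) (y : E) :
    y ∈ convexHull ℝ (Ωᶜ ∩ Metric.closedBall y (Metric.diam Ω)) := by
  by_cases hy : y ∈ Ω
  swap
  · exact subset_convexHull ℝ _ ⟨hy, Metric.mem_closedBall_self Metric.diam_nonneg⟩
  · set e : E := EuclideanSpace.single (⟨0, hn⟩ : Fin n) (1 : ℝ) with hedef
    have he : ‖e‖ = 1 := by rw [hedef, EuclideanSpace.norm_single]; norm_num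
    have he' : ‖-e‖ = 1 := by rw [norm_neg, he]
    obtain ⟨sp, hsp0, hspK, hspcl⟩ := ray_exit hΩo hΩb hy e he
    obtain ⟨sm, hsm0, hsmK, hsmcl⟩ := ray_exit hΩo hΩb hy (-e) he'
    set zp := y + sp • e with hzp
    set zm := y + sm • (-e) with hzm
    have hclb : Bornology.IsBounded (closure Ω) := hΩb.closure
    have hdcl : Metric.diam (closure Ω) = Metric.diam Ω := Metric.diam_closure _
    have hdp : dist zp y ≤ Metric.diam Ω := by
      rw [← hdcl]
      exact Metric.dist_le_diam_of_mem hclb hspcl (subset_closure hy)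
    have hdm : dist zm y ≤ Metric.diam Ω := by
      rw [← hdcl]
      exact Metric.dist_le_diam_of_mem hclb hsmcl (subset_closure hy)
    have hzpmem : zp ∈ Ωᶜ ∩ Metric.closedBall y (Metric.diam Ω) :=
      ⟨hspK, Metric.mem_closedBall.mpr hdp⟩
    have hzmmem : zm ∈ Ωᶜ ∩ Metric.closedBall y (Metric.diam Ω) :=
      ⟨hsmK, Metric.mem_closedBall.mpr hdm⟩
    have hsum : 0 < sp + sm := by linarith
    have hmaster : (sp + sm) • y = sp • zm + sm • zp := by
      rw [hzp, hzm, smul_add, smul_add, smul_smul, smul_smul, smul_neg, add_smul,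
        mul_comm sp sm]
      abel
    have hseg : y ∈ segment ℝ zm zp := by
      refine ⟨sp / (sp + sm), sm / (sp + sm), by positivity, by positivity, ?_, ?_⟩
      · field_simp
      · rw [div_eq_inv_mul, div_eq_inv_mul, mul_smul, mul_smul, ← smul_add, ← hmaster,
          smul_smul, inv_mul_cancel₀ hsum.ne', one_smul]
    exact segment_subset_convexHull hzmmem hzpmem hseg

end Helpers4

section Helpers5

variable {n : ℕ}

local notation "E" => EuclideanSpace ℝ (Fin n)

lemma combo_bound {lam A₀ : ℝ} (hlam : 0 ≤ lam) {f : E → ℝ} (hfb : ∀ y, -A₀ ≤ f y)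
    {ι : Type*} (t : Finset ι) (w : ι → ℝ) (z : ι → E) {y : E} {ρ : ℝ}
    (hw0 : ∀ i ∈ t, 0 ≤ w i) (hw1 : ∑ i ∈ t, w i = 1)
    (hz : ∀ i ∈ t, z i ∈ Metric.closedBall y ρ) (hbar : ∑ i ∈ t, w i • z i = y) :
    ∑ i ∈ t, w i * (lam * ‖z i‖ ^ 2 - f (z i)) ≤ lam * ‖y‖ ^ 2 + lam * ρ ^ 2 + A₀ := by
  have hsq := sum_norm_sq t w z y hw1 hbar
  have h1 : ∀ i ∈ t, w i * (lam * ‖z i‖ ^ 2 - f (z i))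
      ≤ lam * (w i * ‖z i‖ ^ 2) + w i * A₀ := by
    intro i hi
    have h2 := hfb (z i)
    have := hw0 i hi
    nlinarith
  calc ∑ i ∈ t, w i * (lam * ‖z i‖ ^ 2 - f (z i))
      ≤ ∑ i ∈ t, (lam * (w i * ‖z i‖ ^ 2) + w i * A₀) := Finset.sum_le_sum h1
    _ = lam * (∑ i ∈ t, w i * ‖z i‖ ^ 2) + A₀ := by
        rw [Finset.sum_add_distrib, ← Finset.mul_sum, ← Finset.sum_mul, hw1, one_mul]
    _ ≤ lam * ‖y‖ ^ 2 + lam * ρ ^ 2 + A₀ := by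
        rw [hsq]
        have hd : ∑ i ∈ t, w i * ‖z i - y‖ ^ 2 ≤ ρ ^ 2 := by
          have hρ0 : 0 ≤ ρ := by
            rcases Finset.eq_empty_or_nonempty t with rfl | ⟨i, hi⟩
            · simp at hw1
            · have := hz i hi
              rw [Metric.mem_closedBall] at this
              exact le_trans dist_nonneg this
          calc ∑ i ∈ t, w i * ‖z i - y‖ ^ 2 ≤ ∑ i ∈ t, w i * ρ ^ 2 := by
                refine Finset.sum_le_sum fun i hi => ?_
                refine mul_le_mul_of_nonneg_left ?_ (hw0 i hi)
                have hzb := Metric.mem_closedBall.mp (hz i hi)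
                rw [dist_eq_norm] at hzb
                exact pow_le_pow_left₀ (norm_nonneg _) hzb 2
            _ = ρ ^ 2 := by rw [← Finset.sum_mul, hw1, one_mul]
        nlinarith
    
lemma aff_global_bound (hn : 1 ≤ n) {Ω : Set E} (hΩo : IsOpen Ω)
    (hΩb : Bornology.IsBounded Ω) {lam c₀ : ℝ} (hlam : 0 ≤ lam) (ℓ : E →ᵃ[ℝ] ℝ)
    (hK : ∀ y ∈ Ωᶜ, ℓ y ≤ lam * ‖y‖ ^ 2 + c₀) (y : E) :
    ℓ y ≤ lam * ‖y‖ ^ 2 + lam * Metric.diam Ω ^ 2 + c₀ := by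
  have hy := mem_hull_compl hn hΩo hΩb y
  rw [convexHull_eq] at hy
  obtain ⟨ι, t, w, z, hw0, hw1, hz, hcm⟩ := hy
  rw [Finset.centerMass_eq_of_sum_1 _ _ hw1] at hcm
  have hval : ℓ y = ∑ i ∈ t, w i * ℓ (z i) := by rw [← hcm, aff_sum _ _ _ _ hw1]
  have hub : ∀ i ∈ t, w i * ℓ (z i) ≤ w i * (lam * ‖z i‖ ^ 2 - (-c₀)) := by
    intro i hi
    refine mul_le_mul_of_nonneg_left ?_ (hw0 i hi)
    have := hK (z i) (hz i hi).1
    linarith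
  have hcb := combo_bound (A₀ := c₀) hlam (f := fun _ => -c₀) (fun _ => le_refl _) t w z
    hw0 hw1 (fun i hi => (hz i hi).2) hcm
  have : ℓ y ≤ ∑ i ∈ t, w i * (lam * ‖z i‖ ^ 2 - (-c₀)) := by
    rw [hval]; exact Finset.sum_le_sum hub
  exact le_trans this hcb

end Helpers5

section Core

variable {n : ℕ}

local notation "E" => EuclideanSpace ℝ (Fin n)

lemma exists_good_combo (hn : 1 ≤ n) {Ω : Set E} (hΩo : IsOpen Ω) (hΩb : Bornology.IsBounded Ω)
    (f : E → ℝ) (A₀ : ℝ) (hfb : ∀ y, |f y| ≤ A₀)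
    {lam M : ℝ} (hlam : 0 < lam) (hM : A₀ + lam * Metric.diam Ω ^ 2 < M)
    (x : E) {ε : ℝ} (hε : 0 < ε) :
    ∃ (ι : Type) (t : Finset ι) (w : ι → ℝ) (z : ι → E),
      (∀ i ∈ t, 0 ≤ w i) ∧ (∑ i ∈ t, w i = 1) ∧ (∀ i ∈ t, z i ∈ Ωᶜ) ∧
      (∑ i ∈ t, w i • z i = x) ∧
      ∑ i ∈ t, w i * (lam * ‖z i‖ ^ 2 - f (z i)) ≤
        convEnv (fun y => lam * ‖y‖ ^ 2 - extWith Ωᶜ f (-M) y) x + ε := by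
  classical
  set d := Metric.diam Ω with hd
  have hd0 : 0 ≤ d := Metric.diam_nonneg
  set gm : E → ℝ := fun y => lam * ‖y‖ ^ 2 - extWith Ωᶜ f (-M) y with hgm
  have hgmK : ∀ y ∈ Ωᶜ, gm y = lam * ‖y‖ ^ 2 - f y := by
    intro y hy; simp only [hgm, extWith, if_pos hy]
  have hgmΩ : ∀ (y : E), y ∉ Ωᶜ → gm y = lam * ‖y‖ ^ 2 + M := by
    intro y hy; simp only [hgm, extWith, if_neg hy]; ring
  set v := convEnv gm x with hv
  by_contra hcon
  have hcombo : ∀ (ι : Type) (t : Finset ι) (w : ι → ℝ) (z : ι → E),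
      (∀ i ∈ t, 0 ≤ w i) → (∑ i ∈ t, w i = 1) → (∀ i ∈ t, z i ∈ Ωᶜ) →
      (∑ i ∈ t, w i • z i = x) →
      v + ε < ∑ i ∈ t, w i * (lam * ‖z i‖ ^ 2 - f (z i)) := by
    intro ι t w z h1 h2 h3 h4
    by_contra hle
    push_neg at hle
    exact hcon ⟨ι, t, w, z, h1, h2, h3, h4, hle⟩
  set S : Set (E × ℝ) := {p | p.1 ∈ Ωᶜ ∧ lam * ‖p.1‖ ^ 2 - f p.1 ≤ p.2} with hS
  set G := convexHull ℝ S with hG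
  have hGconv : Convex ℝ G := convex_convexHull ℝ S
  set S₀ : Set (E × ℝ) := {p | lam * ‖p.1‖ ^ 2 + lam * d ^ 2 + A₀ < p.2} with hS₀
  have hS₀open : IsOpen S₀ := by
    have hcont : Continuous fun p : E × ℝ => lam * ‖p.1‖ ^ 2 + lam * d ^ 2 + A₀ := by
      fun_prop
    exact isOpen_lt hcont continuous_snd
  have hS₀G : S₀ ⊆ G := by
    rintro ⟨y, c⟩ hyc
    simp only [hS₀, Set.mem_setOf_eq] at hyc
    have hy := mem_hull_compl hn hΩo hΩb y
    rw [convexHull_eq] at hy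
    obtain ⟨ι, t, w, z, hw0, hw1, hz, hcm⟩ := hy
    rw [Finset.centerMass_eq_of_sum_1 _ _ hw1] at hcm
    have hcb := combo_bound hlam.le (f := f) (fun y' => (abs_le.mp (hfb y')).1) t w z hw0 hw1
      (fun i hi => (hz i hi).2) hcm
    set δ := c - ∑ i ∈ t, w i * (lam * ‖z i‖ ^ 2 - f (z i)) with hδ
    have hδ0 : 0 ≤ δ := by rw [hδ]; linarith
    have hmemS : ∀ i ∈ t, (z i, lam * ‖z i‖ ^ 2 - f (z i) + δ) ∈ S := by
      intro i hi
      refine ⟨(hz i hi).1, ?_⟩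
      show lam * ‖z i‖ ^ 2 - f (z i) ≤ lam * ‖z i‖ ^ 2 - f (z i) + δ
      linarith
    have hin : Finset.centerMass t w (fun i => ((z i, lam * ‖z i‖ ^ 2 - f (z i) + δ) : E × ℝ))
        ∈ G := Finset.centerMass_mem_convexHull t hw0 (by rw [hw1]; norm_num) hmemS
    rw [Finset.centerMass_eq_of_sum_1 _ _ hw1] at hin
    have heq : ((y, c) : E × ℝ)
        = ∑ i ∈ t, w i • ((z i, lam * ‖z i‖ ^ 2 - f (z i) + δ) : E × ℝ) := by
      rw [Prod.ext_iff]
      constructor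
      · rw [Prod.fst_sum]
        simp only [Prod.smul_fst]
        exact hcm.symm
      · rw [Prod.snd_sum]
        simp only [Prod.smul_snd, smul_eq_mul]
        have hexp : ∀ i ∈ t, w i * (lam * ‖z i‖ ^ 2 - f (z i) + δ)
            = w i * (lam * ‖z i‖ ^ 2 - f (z i)) + w i * δ := fun i _ => by ring
        rw [Finset.sum_congr rfl hexp, Finset.sum_add_distrib, ← Finset.sum_mul, hw1, hδ]
        ring
    rw [heq]
    exact hin
  have hxG : ((x, v + ε) : E × ℝ) ∉ G := by
    intro hmem
    rw [hG, convexHull_eq] at hmem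
    obtain ⟨ι, t, w, z, hw0, hw1, hzS, hcm⟩ := hmem
    rw [Finset.centerMass_eq_of_sum_1 _ _ hw1] at hcm
    have hfst : ∑ i ∈ t, w i • (z i).1 = x := by
      have h1 := congrArg Prod.fst hcm
      rw [Prod.fst_sum] at h1
      simpa only [Prod.smul_fst] using h1
    have hsnd : ∑ i ∈ t, w i * (z i).2 = v + ε := by
      have h1 := congrArg Prod.snd hcm
      rw [Prod.snd_sum] at h1
      simpa only [Prod.smul_snd, smul_eq_mul] using h1
    have hlt := hcombo ι t w (fun i => (z i).1) hw0 hw1 (fun i hi => (hzS i hi).1) hfst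
    have hle : ∑ i ∈ t, w i * (lam * ‖(z i).1‖ ^ 2 - f ((z i).1)) ≤ ∑ i ∈ t, w i * (z i).2 :=
      Finset.sum_le_sum fun i hi => mul_le_mul_of_nonneg_left (hzS i hi).2 (hw0 i hi)
    rw [hsnd] at hle
    linarith
  have hq0 : ((x, lam * ‖x‖ ^ 2 + lam * d ^ 2 + A₀ + 1) : E × ℝ) ∈ interior G :=
    interior_maximal hS₀G hS₀open (by simp only [hS₀, Set.mem_setOf_eq]; linarith)
  obtain ⟨φ, hφ⟩ := geometric_hahn_banach_open_point (hGconv.interior) isOpen_interior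
      (fun hc => hxG (interior_subset hc))
  have hG_le : ∀ p ∈ G, φ p ≤ φ ((x, v + ε) : E × ℝ) := by
    intro p hp
    have hcomb : ∀ θ : ℝ, 0 < θ → θ ≤ 1 →
        (1 - θ) * φ p + θ * φ ((x, lam * ‖x‖ ^ 2 + lam * d ^ 2 + A₀ + 1) : E × ℝ)
          < φ ((x, v + ε) : E × ℝ) := by
      intro θ h0 h1
      have hmemI := hGconv.combo_self_interior_mem_interior hp hq0
        (by linarith : (0:ℝ) ≤ 1 - θ) h0 (by ring)
      have h2 := hφ _ hmemI
      have h3 : φ ((1 - θ) • p + θ • ((x, lam * ‖x‖ ^ 2 + lam * d ^ 2 + A₀ + 1) : E × ℝ))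
          = (1 - θ) * φ p + θ * φ ((x, lam * ‖x‖ ^ 2 + lam * d ^ 2 + A₀ + 1) : E × ℝ) := by
        rw [map_add, map_smul, map_smul]; rfl
      rw [h3] at h2
      exact h2
    have htend : Filter.Tendsto
        (fun θ : ℝ => (1 - θ) * φ p
          + θ * φ ((x, lam * ‖x‖ ^ 2 + lam * d ^ 2 + A₀ + 1) : E × ℝ))
        (nhdsWithin 0 (Set.Ioi 0)) (nhds (φ p)) := by
      have hcont : Continuous (fun θ : ℝ => (1 - θ) * φ p
          + θ * φ ((x, lam * ‖x‖ ^ 2 + lam * d ^ 2 + A₀ + 1) : E × ℝ)) := by fun_prop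
      have h4 := hcont.tendsto 0
      simp only [sub_zero, one_mul, zero_mul, add_zero] at h4
      exact h4.mono_left nhdsWithin_le_nhds
    refine le_of_tendsto htend ?_
    filter_upwards [Ioc_mem_nhdsGT_of_mem (Set.mem_Ico.mpr ⟨le_refl (0:ℝ), zero_lt_one⟩)]
      with θ hθ
    exact (hcomb θ hθ.1 hθ.2).le
  set β := φ ((0 : E), (1 : ℝ)) with hβ
  have hsplit : ∀ (y : E) (c : ℝ), φ (y, c) = φ (y, 0) + c * β := by
    intro y c
    have h1 : ((y, c) : E × ℝ) = (y, 0) + c • ((0:E), (1:ℝ)) := by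
      simp [Prod.ext_iff]
    rw [h1, map_add, map_smul, smul_eq_mul, hβ]
  have hβneg : β < 0 := by
    rcases lt_trichotomy β 0 with h | h | h
    · exact h
    · exfalso
      have h2 := hφ _ hq0
      rw [hsplit x (lam * ‖x‖ ^ 2 + lam * d ^ 2 + A₀ + 1), hsplit x (v + ε), h] at h2
      simp at h2
    · exfalso
      set C := max (lam * ‖x‖ ^ 2 + lam * d ^ 2 + A₀ + 1)
        ((φ ((x, v + ε) : E × ℝ) - φ ((x, 0) : E × ℝ) + 1) / β) with hC
      have hCS₀ : ((x, C) : E × ℝ) ∈ S₀ := by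
        simp only [hS₀, Set.mem_setOf_eq, hC]
        calc lam * ‖x‖ ^ 2 + lam * d ^ 2 + A₀
            < lam * ‖x‖ ^ 2 + lam * d ^ 2 + A₀ + 1 := by linarith
          _ ≤ C := le_max_left _ _
      have h2 := hG_le _ (hS₀G hCS₀)
      rw [hsplit x C, hsplit x (v + ε)] at h2
      have h3 : (φ ((x, v + ε) : E × ℝ) - φ ((x, 0) : E × ℝ) + 1) / β ≤ C := le_max_right _ _
      have h4 : (φ ((x, v + ε) : E × ℝ) - φ ((x, 0) : E × ℝ) + 1) ≤ C * β := by
        rw [div_le_iff₀ h] at h3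
        linarith
      rw [hsplit x (v + ε)] at h4
      linarith
  set ψ : E →L[ℝ] ℝ := φ.comp (ContinuousLinearMap.inl ℝ E ℝ) with hψ
  have hψval : ∀ y : E, ψ y = φ ((y, 0) : E × ℝ) := by
    intro y
    simp [hψ]
  have hβ' : β ≠ 0 := hβneg.ne
  have hβinv : β⁻¹ < 0 := inv_lt_zero.mpr hβneg
  have hβmul : β * β⁻¹ = 1 := mul_inv_cancel₀ hβ'
  set ℓ : E →ᵃ[ℝ] ℝ := AffineMap.mk' (fun y => β⁻¹ * (ψ x - ψ y) + (v + ε))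
      ((-β⁻¹) • ψ.toLinearMap) x (by
        intro p
        simp only [LinearMap.smul_apply, ContinuousLinearMap.coe_coe, vsub_eq_sub,
          vadd_eq_add, map_sub, smul_eq_mul, sub_self, mul_zero, zero_add]
        ring) with hℓ
  have hℓ_apply : ∀ y, ℓ y = β⁻¹ * (ψ x - ψ y) + (v + ε) := by
    intro y
    rw [hℓ, AffineMap.coe_mk']
  have hℓK : ∀ y ∈ Ωᶜ, ℓ y ≤ lam * ‖y‖ ^ 2 - f y := by
    intro y hy
    have hyG : ((y, lam * ‖y‖ ^ 2 - f y) : E × ℝ) ∈ G :=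
      subset_convexHull ℝ S ⟨hy, le_refl _⟩
    have h2 := hG_le _ hyG
    rw [hsplit y (lam * ‖y‖ ^ 2 - f y), hsplit x (v + ε)] at h2
    have hP : (lam * ‖y‖ ^ 2 - f y - (v + ε)) * β ≤ φ ((x, 0) : E × ℝ) - φ ((y, 0) : E × ℝ) := by
      nlinarith [h2]
    have h5 : (φ ((x, 0) : E × ℝ) - φ ((y, 0) : E × ℝ)) / β
        ≤ lam * ‖y‖ ^ 2 - f y - (v + ε) := (div_le_iff_of_neg hβneg).mpr hP
    rw [hℓ_apply y, hψval y, hψval x, inv_mul_eq_div]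
    linarith
  have hℓglob : ∀ y, ℓ y ≤ gm y := by
    intro y
    by_cases hy : y ∈ Ωᶜ
    · rw [hgmK y hy]; exact hℓK y hy
    · rw [hgmΩ y hy]
      have hbound := aff_global_bound hn hΩo hΩb hlam.le ℓ (c₀ := A₀)
        (fun y' hy' => by
          have h1 := hℓK y' hy'
          have h2 := (abs_le.mp (hfb y')).1
          linarith) y
      rw [← hd] at hbound
      linarith
  have hmem : ℓ x ∈ {a : ℝ | ∃ ℓ' : E →ᵃ[ℝ] ℝ, (∀ y, ℓ' y ≤ gm y) ∧ a = ℓ' x} :=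
    ⟨ℓ, hℓglob, rfl⟩
  have hbddA : BddAbove {a : ℝ | ∃ ℓ' : E →ᵃ[ℝ] ℝ, (∀ y, ℓ' y ≤ gm y) ∧ a = ℓ' x} := by
    refine ⟨lam * ‖x‖ ^ 2 + lam * d ^ 2 + A₀, ?_⟩
    rintro a ⟨ℓ', hℓ', rfl⟩
    have := aff_global_bound hn hΩo hΩb hlam.le ℓ' (c₀ := A₀) (fun y hy => by
      have h1 := hℓ' y
      rw [hgmK y hy] at h1
      have h2 := (abs_le.mp (hfb y)).1
      linarith) x
    rw [← hd] at this
    exact this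
  have hle : ℓ x ≤ v := le_csSup hbddA hmem
  rw [hℓ_apply] at hle
  simp only [sub_self, mul_zero, zero_add] at hle
  linarith

end Core

section Half

variable {n : ℕ}

local notation "E" => EuclideanSpace ℝ (Fin n)

lemma half_bound (hn : 1 ≤ n) (Ω : Set E) (hΩo : IsOpen Ω) (hΩb : Bornology.IsBounded Ω)
    (f : E → ℝ) (A₀ : ℝ) (hA₀ : 0 < A₀) (hfb : ∀ x, |f x| ≤ A₀)
    (ω : ℝ → ℝ) (hωcc : ConcaveOn ℝ (Set.Ici 0) ω) (hωm : MonotoneOn ω (Set.Ici 0))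
    (hω0 : ∀ t, 0 ≤ t → 0 ≤ ω t)
    (hmod : ∀ x y, |f x - f y| ≤ ω ‖x - y‖)
    (a b : ℝ) (ha : 0 ≤ a) (hb : 0 ≤ b) (hab : ∀ t, 0 ≤ t → ω t ≤ a * t + b)
    (lam M : ℝ) (hlam : 0 < lam) (hM : A₀ + lam * Metric.diam Ω ^ 2 < M)
    (x : E) :
    avgApprox lam M Ωᶜ f x - f x ≤
      ω (convDensRad Ωᶜ x + a / lam + Real.sqrt (2 * b / lam)) := by
  classical
  set d := Metric.diam Ω with hd
  have hd0 : 0 ≤ d := Metric.diam_nonneg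
  have hlamd : 0 ≤ lam * d ^ 2 := by positivity
  have hA₀M : A₀ < M := by linarith
  set τ := a / lam + Real.sqrt (2 * b / lam) with hτ
  have hτ0 : 0 ≤ τ := by positivity
  set gp : E → ℝ := fun y => extWith Ωᶜ f M y + lam * ‖y‖ ^ 2 with hgp
  set gm : E → ℝ := fun y => lam * ‖y‖ ^ 2 - extWith Ωᶜ f (-M) y with hgm
  have hgpK : ∀ y ∈ Ωᶜ, gp y = f y + lam * ‖y‖ ^ 2 := by
    intro y hy; simp only [hgp, extWith, if_pos hy]
  have hgpΩ : ∀ (y : E), y ∉ Ωᶜ → gp y = M + lam * ‖y‖ ^ 2 := by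
    intro y hy; simp only [hgp, extWith, if_neg hy]
  have hgmK : ∀ y ∈ Ωᶜ, gm y = lam * ‖y‖ ^ 2 - f y := by
    intro y hy; simp only [hgm, extWith, if_pos hy]
  have hgmΩ : ∀ (y : E), y ∉ Ωᶜ → gm y = lam * ‖y‖ ^ 2 + M := by
    intro y hy; simp only [hgm, extWith, if_neg hy]; ring
  have hAvg : avgApprox lam M Ωᶜ f x = (convEnv gp x - convEnv gm x) / 2 := by
    simp only [avgApprox, lowerT, upperT, hgp, hgm]
    ring
  set rc := convDensRad Ωᶜ x with hrc
  have hSne : d ∈ {r : ℝ | 0 ≤ r ∧ x ∈ convexHull ℝ (Ωᶜ ∩ Metric.closedBall x r)} :=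
    ⟨hd0, mem_hull_compl hn hΩo hΩb x⟩
  have hrc0 : 0 ≤ rc := by
    rw [hrc, convDensRad]
    exact le_csInf ⟨d, hSne⟩ fun r hr => hr.1
  -- canonical minorants
  have hkey : ∀ y : E, ω ‖y - x‖ ≤ ω τ + lam * ‖y - x‖ ^ 2 := fun y =>
    omega_quad hωm hω0 hab ha hb hlam _ (norm_nonneg _)
  have hkey' : ∀ y : E, ω ‖x - y‖ ≤ ω τ + lam * ‖y - x‖ ^ 2 := by
    intro y
    rw [norm_sub_rev]
    exact hkey y
  have hminor_m : ∀ y, affIn ((2 * lam) • x) (-(f x) - ω τ - lam * ‖x‖ ^ 2) y ≤ gm y := by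
    intro y
    rw [affIn_apply, real_inner_smul_left]
    have hexp : lam * ‖y - x‖ ^ 2 = lam * ‖y‖ ^ 2 - 2 * lam * ⟪x, y⟫ + lam * ‖x‖ ^ 2 := by
      rw [norm_sub_sq_real, real_inner_comm y x]; ring
    by_cases hy : y ∈ Ωᶜ
    · rw [hgmK y hy]
      have h1 := hkey y
      have h2 := (abs_le.mp (hmod y x)).2
      linarith
    · rw [hgmΩ y hy]
      have h3 := hω0 τ hτ0
      have h4 := (abs_le.mp (hfb x)).1
      have h5 : 0 ≤ lam * ‖y - x‖ ^ 2 := by positivity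
      linarith
  have hminor_p : ∀ y, affIn ((2 * lam) • x) (f x - ω τ - lam * ‖x‖ ^ 2) y ≤ gp y := by
    intro y
    rw [affIn_apply, real_inner_smul_left]
    have hexp : lam * ‖y - x‖ ^ 2 = lam * ‖y‖ ^ 2 - 2 * lam * ⟪x, y⟫ + lam * ‖x‖ ^ 2 := by
      rw [norm_sub_sq_real, real_inner_comm y x]; ring
    by_cases hy : y ∈ Ωᶜ
    · rw [hgpK y hy]
      have h1 := hkey' y
      have h2 := (abs_le.mp (hmod x y)).2
      linarith
    · rw [hgpΩ y hy]
      have h3 := hω0 τ hτ0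
      have h4 := (abs_le.mp (hfb x)).2
      have h5 : 0 ≤ lam * ‖y - x‖ ^ 2 := by positivity
      linarith
  have hne_m : Set.Nonempty {a' : ℝ | ∃ ℓ : E →ᵃ[ℝ] ℝ, (∀ y, ℓ y ≤ gm y) ∧ a' = ℓ x} :=
    ⟨_, ⟨affIn ((2 * lam) • x) (-(f x) - ω τ - lam * ‖x‖ ^ 2), hminor_m, rfl⟩⟩
  have hne_p : Set.Nonempty {a' : ℝ | ∃ ℓ : E →ᵃ[ℝ] ℝ, (∀ y, ℓ y ≤ gp y) ∧ a' = ℓ x} :=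
    ⟨_, ⟨affIn ((2 * lam) • x) (f x - ω τ - lam * ‖x‖ ^ 2), hminor_p, rfl⟩⟩
  -- main estimate with slack θ
  have main : ∀ θ : ℝ, 0 < θ →
      avgApprox lam M Ωᶜ f x - f x ≤ ω (rc + τ) + θ := by
    intro θ hθ
    -- choose η
    have hη : ∃ η : ℝ, 0 < η ∧ ω (rc + τ + η) ≤ ω (rc + τ) + θ / 2 := by
      by_cases hzero : a = 0 ∧ b = 0
      · refine ⟨1, one_pos, ?_⟩
        have h1 := hab (rc + τ + 1) (by linarith)
        have h2 := hω0 (rc + τ) (by linarith)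
        rw [hzero.1, hzero.2] at h1
        simp only [zero_mul, add_zero, zero_add] at h1
        linarith
      · have hτpos : 0 < τ := by
          rcases not_and_or.mp hzero with h | h
          · have ha' : 0 < a := lt_of_le_of_ne ha (Ne.symm h)
            have : 0 < a / lam := by positivity
            have := Real.sqrt_nonneg (2 * b / lam)
            rw [hτ]; linarith
          · have hb' : 0 < b := lt_of_le_of_ne hb (Ne.symm h)
            have h6 : 0 < Real.sqrt (2 * b / lam) := Real.sqrt_pos.mpr (by positivity)
            have : 0 ≤ a / lam := by positivity
            rw [hτ]; linarith
        have hRpos : 0 < rc + τ := by linarith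
        have hcc : ConcaveOn ℝ (Set.Ioi (0 : ℝ)) ω :=
          hωcc.subset Set.Ioi_subset_Ici_self (convex_Ioi 0)
        have hcont : ContinuousOn ω (Set.Ioi (0 : ℝ)) := hcc.continuousOn isOpen_Ioi
        have hca : ContinuousAt ω (rc + τ) := hcont.continuousAt (Ioi_mem_nhds hRpos)
        have hev : ∀ᶠ y in nhds (rc + τ), ω y < ω (rc + τ) + θ / 2 :=
          hca.tendsto.eventually_lt_const (by linarith)
        rw [Metric.eventually_nhds_iff] at hev
        obtain ⟨δ', hδ'pos, hδ'⟩ := hev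
        refine ⟨δ' / 2, by positivity, ?_⟩
        have hdist : dist (rc + τ + δ' / 2) (rc + τ) < δ' := by
          rw [Real.dist_eq]
          have he : rc + τ + δ' / 2 - (rc + τ) = δ' / 2 := by ring
          rw [he, abs_of_pos (by positivity)]
          linarith
        exact (hδ' hdist).le
    obtain ⟨η, hηpos, hηbound⟩ := hη
    -- choose r'
    have hrc_lt : sInf {r : ℝ | 0 ≤ r ∧ x ∈ convexHull ℝ (Ωᶜ ∩ Metric.closedBall x r)}
        < rc + η / 2 := by
      have : rc = sInf {r : ℝ | 0 ≤ r ∧ x ∈ convexHull ℝ (Ωᶜ ∩ Metric.closedBall x r)} := by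
        rw [hrc, convDensRad]
      rw [← this]; linarith
    obtain ⟨r', hr'S, hr'lt⟩ := exists_lt_of_csInf_lt ⟨d, hSne⟩ hrc_lt
    have hr'0 : 0 ≤ r' := hr'S.1
    have hr'hull := hr'S.2
    -- choose ε
    set ε := min θ (lam * (η / 2) ^ 2) with hε
    have hεpos : 0 < ε := lt_min hθ (by positivity)
    have hεθ : ε ≤ θ := min_le_left _ _
    have hεsq : ε ≤ lam * (η / 2) ^ 2 := min_le_right _ _
    -- good combo
    obtain ⟨ι, t, w, z, hw0, hw1, hzK, hbar, hval⟩ :=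
      exists_good_combo hn hΩo hΩb f A₀ hfb hlam hM x hεpos
    set m := ∑ i ∈ t, w i * ‖z i - x‖ with hm
    have hm0 : 0 ≤ m :=
      Finset.sum_nonneg fun i hi => mul_nonneg (hw0 i hi) (norm_nonneg _)
    have hJ : ∑ i ∈ t, w i * ω ‖z i - x‖ ≤ ω m := by
      have h1 := hωcc.le_map_sum (p := fun i => ‖z i - x‖) hw0 hw1
        (fun i _ => Set.mem_Ici.mpr (norm_nonneg (z i - x)))
      simpa [smul_eq_mul] using h1
    have hf_ub : ∑ i ∈ t, w i * f (z i) ≤ f x + ω m := by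
      have h1 : ∀ i ∈ t, w i * f (z i) ≤ w i * (f x + ω ‖z i - x‖) := by
        intro i hi
        refine mul_le_mul_of_nonneg_left ?_ (hw0 i hi)
        have h2 := (abs_le.mp (hmod (z i) x)).2
        linarith
      have h3 : ∀ i ∈ t, w i * (f x + ω ‖z i - x‖)
          = w i * f x + w i * ω ‖z i - x‖ := fun i _ => by ring
      calc ∑ i ∈ t, w i * f (z i) ≤ ∑ i ∈ t, w i * (f x + ω ‖z i - x‖) :=
            Finset.sum_le_sum h1
        _ = f x + ∑ i ∈ t, w i * ω ‖z i - x‖ := by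
            rw [Finset.sum_congr rfl h3, Finset.sum_add_distrib, ← Finset.sum_mul, hw1, one_mul]
        _ ≤ f x + ω m := by linarith
    have hf_lb : f x - ω m ≤ ∑ i ∈ t, w i * f (z i) := by
      have h1 : ∀ i ∈ t, w i * (f x - ω ‖z i - x‖) ≤ w i * f (z i) := by
        intro i hi
        refine mul_le_mul_of_nonneg_left ?_ (hw0 i hi)
        have h2 := (abs_le.mp (hmod (z i) x)).1
        linarith
      have h3 : ∀ i ∈ t, w i * (f x - ω ‖z i - x‖)
          = w i * f x - w i * ω ‖z i - x‖ := fun i _ => by ring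
      calc f x - ω m ≤ ∑ i ∈ t, w i * (f x - ω ‖z i - x‖) := by
            rw [Finset.sum_congr rfl h3, Finset.sum_sub_distrib, ← Finset.sum_mul, hw1, one_mul]
            linarith
        _ ≤ ∑ i ∈ t, w i * f (z i) := Finset.sum_le_sum h1
    have hsq := sum_norm_sq t w z x hw1 hbar
    have hm2 : m ^ 2 ≤ ∑ i ∈ t, w i * ‖z i - x‖ ^ 2 := by
      have h1 := (convexOn_pow (𝕜 := ℝ) 2).map_sum_le (p := fun i => ‖z i - x‖) hw0 hw1
        (fun i _ => Set.mem_Ici.mpr (norm_nonneg (z i - x)))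
      simpa [smul_eq_mul] using h1
    -- upper bound for v := convEnv gm x via the r'-combo
    have hv_ub : convEnv gm x ≤ lam * ‖x‖ ^ 2 + lam * r' ^ 2 - f x + ω r' := by
      rw [convexHull_eq] at hr'hull
      obtain ⟨ι₂, t₂, w₂, z₂, hw₂0, hw₂1, hz₂, hcm₂⟩ := hr'hull
      rw [Finset.centerMass_eq_of_sum_1 _ _ hw₂1] at hcm₂
      have hcsup : convEnv gm x ≤ ∑ i ∈ t₂, w₂ i * gm (z₂ i) := by
        refine csSup_le hne_m ?_
        rintro a' ⟨ℓ, hℓ, rfl⟩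
        calc ℓ x = ∑ i ∈ t₂, w₂ i * ℓ (z₂ i) := by rw [← hcm₂, aff_sum _ _ _ _ hw₂1]
          _ ≤ ∑ i ∈ t₂, w₂ i * gm (z₂ i) :=
              Finset.sum_le_sum fun i hi =>
                mul_le_mul_of_nonneg_left (hℓ (z₂ i)) (hw₂0 i hi)
      have hsq₂ := sum_norm_sq t₂ w₂ z₂ x hw₂1 hcm₂
      have hval₂ : ∑ i ∈ t₂, w₂ i * gm (z₂ i)
          = lam * (∑ i ∈ t₂, w₂ i * ‖z₂ i‖ ^ 2) - ∑ i ∈ t₂, w₂ i * f (z₂ i) := by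
        have h1 : ∀ i ∈ t₂, w₂ i * gm (z₂ i)
            = lam * (w₂ i * ‖z₂ i‖ ^ 2) - w₂ i * f (z₂ i) := by
          intro i hi
          rw [hgmK _ (hz₂ i hi).1]
          ring
        rw [Finset.sum_congr rfl h1, Finset.sum_sub_distrib, Finset.mul_sum]
      have hdist₂ : ∑ i ∈ t₂, w₂ i * ‖z₂ i - x‖ ^ 2 ≤ r' ^ 2 := by
        calc ∑ i ∈ t₂, w₂ i * ‖z₂ i - x‖ ^ 2 ≤ ∑ i ∈ t₂, w₂ i * r' ^ 2 := by
              refine Finset.sum_le_sum fun i hi => ?_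
              refine mul_le_mul_of_nonneg_left ?_ (hw₂0 i hi)
              have hzb := Metric.mem_closedBall.mp (hz₂ i hi).2
              rw [dist_eq_norm] at hzb
              exact pow_le_pow_left₀ (norm_nonneg _) hzb 2
          _ = r' ^ 2 := by rw [← Finset.sum_mul, hw₂1, one_mul]
      have hflb₂ : f x - ω r' ≤ ∑ i ∈ t₂, w₂ i * f (z₂ i) := by
        have h1 : ∀ i ∈ t₂, w₂ i * (f x - ω r') ≤ w₂ i * f (z₂ i) := by
          intro i hi
          refine mul_le_mul_of_nonneg_left ?_ (hw₂0 i hi)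
          have h2 := (abs_le.mp (hmod (z₂ i) x)).1
          have hzb := Metric.mem_closedBall.mp (hz₂ i hi).2
          rw [dist_eq_norm] at hzb
          have h4 : ω ‖z₂ i - x‖ ≤ ω r' :=
            hωm (Set.mem_Ici.mpr (norm_nonneg _)) (Set.mem_Ici.mpr hr'0) hzb
          linarith
        calc f x - ω r' = ∑ i ∈ t₂, w₂ i * (f x - ω r') := by
              rw [← Finset.sum_mul, hw₂1, one_mul]
          _ ≤ ∑ i ∈ t₂, w₂ i * f (z₂ i) := Finset.sum_le_sum h1
      have hlamdist : lam * (∑ i ∈ t₂, w₂ i * ‖z₂ i - x‖ ^ 2) ≤ lam * r' ^ 2 :=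
        mul_le_mul_of_nonneg_left hdist₂ hlam.le
      calc convEnv gm x ≤ ∑ i ∈ t₂, w₂ i * gm (z₂ i) := hcsup
        _ = lam * (∑ i ∈ t₂, w₂ i * ‖z₂ i‖ ^ 2) - ∑ i ∈ t₂, w₂ i * f (z₂ i) := hval₂
        _ ≤ lam * ‖x‖ ^ 2 + lam * r' ^ 2 - f x + ω r' := by
            rw [hsq₂]
            have hexp2 : lam * (‖x‖ ^ 2 + ∑ i ∈ t₂, w₂ i * ‖z₂ i - x‖ ^ 2)
                = lam * ‖x‖ ^ 2 + lam * (∑ i ∈ t₂, w₂ i * ‖z₂ i - x‖ ^ 2) := by ring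
            linarith [hlamdist, hflb₂, hexp2]
    -- upper bound for u := convEnv gp x via the good combo
    have hu_ub : convEnv gp x ≤ ∑ i ∈ t, w i * gp (z i) := by
      refine csSup_le hne_p ?_
      rintro a' ⟨ℓ, hℓ, rfl⟩
      calc ℓ x = ∑ i ∈ t, w i * ℓ (z i) := by rw [← hbar, aff_sum _ _ _ _ hw1]
        _ ≤ ∑ i ∈ t, w i * gp (z i) :=
            Finset.sum_le_sum fun i hi => mul_le_mul_of_nonneg_left (hℓ (z i)) (hw0 i hi)
    have hgp_val : ∑ i ∈ t, w i * gp (z i)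
        = (∑ i ∈ t, w i * (lam * ‖z i‖ ^ 2 - f (z i))) + 2 * ∑ i ∈ t, w i * f (z i) := by
      have h1 : ∀ i ∈ t, w i * gp (z i)
          = w i * (lam * ‖z i‖ ^ 2 - f (z i)) + 2 * (w i * f (z i)) := by
        intro i hi
        rw [hgpK _ (hzK i hi)]
        ring
      rw [Finset.sum_congr rfl h1, Finset.sum_add_distrib, Finset.mul_sum]
    -- lower bound for the combo value of gm in terms of m
    have hgm_combo : lam * ‖x‖ ^ 2 + lam * (∑ i ∈ t, w i * ‖z i - x‖ ^ 2) - f x - ω m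
        ≤ ∑ i ∈ t, w i * (lam * ‖z i‖ ^ 2 - f (z i)) := by
      have h1 : ∑ i ∈ t, w i * (lam * ‖z i‖ ^ 2 - f (z i))
          = lam * (∑ i ∈ t, w i * ‖z i‖ ^ 2) - ∑ i ∈ t, w i * f (z i) := by
        have h2 : ∀ i ∈ t, w i * (lam * ‖z i‖ ^ 2 - f (z i))
            = lam * (w i * ‖z i‖ ^ 2) - w i * f (z i) := fun i _ => by ring
        rw [Finset.sum_congr rfl h2, Finset.sum_sub_distrib, Finset.mul_sum]
      rw [h1, hsq]
      have hexp2 : lam * (‖x‖ ^ 2 + ∑ i ∈ t, w i * ‖z i - x‖ ^ 2)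
          = lam * ‖x‖ ^ 2 + lam * (∑ i ∈ t, w i * ‖z i - x‖ ^ 2) := by ring
      linarith [hf_ub, hexp2]
    -- combine: lam * Σ w d² ≤ lam r'² + ω m + ω r' + ε
    have hA : lam * (∑ i ∈ t, w i * ‖z i - x‖ ^ 2)
        ≤ lam * r' ^ 2 + ω m + ω r' + ε := by
      have h1 := le_trans hval (by linarith [hv_ub] :
        convEnv gm x + ε ≤ lam * ‖x‖ ^ 2 + lam * r' ^ 2 - f x + ω r' + ε)
      linarith [hgm_combo]
    have hB : lam * m ^ 2 ≤ lam * r' ^ 2 + a * m + a * r' + 2 * b + ε := by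
      have h1 : lam * m ^ 2 ≤ lam * (∑ i ∈ t, w i * ‖z i - x‖ ^ 2) :=
        mul_le_mul_of_nonneg_left hm2 hlam.le
      have h2 := hab m hm0
      have h3 := hab r' hr'0
      linarith
    have hmle := m_bound hlam ha hb hεpos.le hm0 hr'0 hB
    have hsqrt : Real.sqrt (ε / lam) ≤ η / 2 := by
      have h1 : ε / lam ≤ (η / 2) ^ 2 := by
        rw [div_le_iff₀ hlam]
        linarith [hεsq]
      calc Real.sqrt (ε / lam) ≤ Real.sqrt ((η / 2) ^ 2) := Real.sqrt_le_sqrt h1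
        _ = η / 2 := Real.sqrt_sq (by positivity)
    have hmfin : m ≤ rc + τ + η := by
      have : r' + (a / lam + Real.sqrt (2 * b / lam)) + Real.sqrt (ε / lam)
          ≤ rc + η / 2 + τ + η / 2 := by
        rw [← hτ]
        linarith [hr'lt, hsqrt]
      calc m ≤ _ := hmle
        _ ≤ rc + η / 2 + τ + η / 2 := this
        _ = rc + τ + η := by ring
    have hωfin : ω m ≤ ω (rc + τ) + θ / 2 := by
      have h1 : ω m ≤ ω (rc + τ + η) :=
        hωm (Set.mem_Ici.mpr hm0) (Set.mem_Ici.mpr (by linarith)) hmfin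
      linarith
    -- final chain
    have hfinal : convEnv gp x - convEnv gm x ≤ ε + 2 * (f x + ω m) := by
      have h1 := le_trans hu_ub (le_of_eq hgp_val)
      have h2 : ∑ i ∈ t, w i * (lam * ‖z i‖ ^ 2 - f (z i)) ≤ convEnv gm x + ε := hval
      have h3 : ∑ i ∈ t, w i * f (z i) ≤ f x + ω m := hf_ub
      linarith
    rw [hAvg]
    linarith
  have hargs : rc + τ = convDensRad Ωᶜ x + a / lam + Real.sqrt (2 * b / lam) := by
    rw [hrc, hτ]; ring
  rw [← hargs]
  by_contra hcontra
  push_neg at hcontra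
  have h1 := main ((avgApprox lam M Ωᶜ f x - f x - ω (rc + τ)) / 2) (by linarith)
  linarith

end Half

section Final

variable {n : ℕ}

local notation "E" => EuclideanSpace ℝ (Fin n)

lemma avg_neg (lam M : ℝ) (K : Set E) (f : E → ℝ) (x : E) :
    avgApprox lam M K (fun y => -f y) x = -avgApprox lam M K f x := by
  have e₁ : (fun y : E => extWith K (fun y' => -f y') M y + lam * ‖y‖ ^ 2)
      = fun y : E => lam * ‖y‖ ^ 2 - extWith K f (-M) y := by
    funext y
    simp only [extWith]
    split_ifs <;> ring
  have e₂ : (fun y : E => lam * ‖y‖ ^ 2 - extWith K (fun y' => -f y') (-M) y)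
      = fun y : E => extWith K f M y + lam * ‖y‖ ^ 2 := by
    funext y
    simp only [extWith]
    split_ifs <;> ring
  simp only [avgApprox, lowerT, upperT, e₁, e₂]
  ring

end Final

/-- Error estimate for the average approximation when `K` is the complement of a
bounded open set. -/
theorem avgApprox_error_estimate_complement (n : ℕ) (hn : 1 ≤ n)
    (Ω : Set (EuclideanSpace ℝ (Fin n))) (hΩne : Ω.Nonempty) (hΩo : IsOpen Ω)
    (hΩb : Bornology.IsBounded Ω)
    (f : EuclideanSpace ℝ (Fin n) → ℝ) (A₀ : ℝ) (hA₀ : 0 < A₀)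
    (hfb : ∀ x, |f x| ≤ A₀) (hfu : UniformContinuous f)
    (ω : ℝ → ℝ) (hωcc : ConcaveOn ℝ (Set.Ici 0) ω) (hωm : MonotoneOn ω (Set.Ici 0))
    (hω0 : ∀ t, 0 ≤ t → 0 ≤ ω t)
    (hmod : ∀ x y, |f x - f y| ≤ ω ‖x - y‖)
    (a b : ℝ) (ha : 0 ≤ a) (hb : 0 ≤ b) (hab : ∀ t, 0 ≤ t → ω t ≤ a * t + b)
    (lam M : ℝ) (hlam : 0 < lam) (hM : A₀ + lam * Metric.diam Ω ^ 2 < M)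
    (x : EuclideanSpace ℝ (Fin n)) :
    |avgApprox lam M Ωᶜ f x - f x| ≤
      ω (convDensRad Ωᶜ x + a / lam + Real.sqrt (2 * b / lam)) := by
  
  rw [abs_sub_le_iff]
  constructor
  · exact half_bound hn Ω hΩo hΩb f A₀ hA₀ hfb ω hωcc hωm hω0 hmod a b ha hb hab
      lam M hlam hM x
  · have hfb' : ∀ y : EuclideanSpace ℝ (Fin n), |(fun y' => -f y') y| ≤ A₀ := by
      intro y; simpa using hfb y
    have hmod' : ∀ x' y' : EuclideanSpace ℝ (Fin n),
        |(fun y'' => -f y'') x' - (fun y'' => -f y'') y'| ≤ ω ‖x' - y'‖ := by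
      intro x' y'
      have h1 : (fun y'' => -f y'') x' - (fun y'' => -f y'') y' = -(f x' - f y') := by ring
      rw [h1, abs_neg]
      exact hmod x' y'
    have h1 := half_bound hn Ω hΩo hΩb (fun y => -f y) A₀ hA₀ hfb' ω hωcc hωm hω0 hmod'
      a b ha hb hab lam M hlam hM x
    rw [avg_neg] at h1
    have h2 : -avgApprox lam M Ωᶜ f x + f x ≤
        ω (convDensRad Ωᶜ x + a / lam + Real.sqrt (2 * b / lam)) := by
      simpa using h1
    linarith
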